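/- In a biconnected graph G with strictly fewer agents than nodes, the dominant agent of Causal-PIBT never reverts to contracted: if the dominant agent a_d became contracted, every other agent in its tree T_d would be contracted with empty candidate set, forcing V(T_d) \ {tail(d)} to have no neighbors outside V(T_d); by biconnectivity (removing tail(d) leaves G \ {tail(d)} connected), T_d would then span all of G, contradicting |A| < |V|. -/
import Mathlib


/-- In Causal-PIBT on a biconnected graph `G` with strictly fewer agents than
nodes, the dominant agent never reverts to contracted.  If it did, every node of
its dominant tree other than `tail d` would have all of its neighbors inside the
tree's vertex set `S`; since `G` remains connected after deleting `tail d`, `S`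
would then span all of `G`, contradicting `|A| < |V|` — hence such a
configuration is impossible. -/
theorem dominant_agent_never_contracted
    {V A : Type*} [Fintype V] [Fintype A] (G : SimpleGraph V)
    (hconn : G.Connected)
    (hbic : ∀ u : V, ((⊤ : G.Subgraph).deleteVerts {u}).coe.Connected)
    (hA : Fintype.card A < Fintype.card V)
    (tail : A → V) (htail : Function.Injective tail)
    (S : Set V) (hS : S ⊆ Set.range tail)
    (d : A) (hd : tail d ∈ S)
    (hne : (S \ {tail d}).Nonempty)
    (hclosed : ∀ x ∈ S \ {tail d}, ∀ y : V, G.Adj x y → y ∈ S) :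
    False := by
  classical
  have walkS : ∀ (a b : ↥((⊤ : G.Subgraph).deleteVerts {tail d}).verts)
      (p : ((⊤ : G.Subgraph).deleteVerts {tail d}).coe.Walk a b),
      (a : V) ∈ S → (b : V) ∈ S := by
    intro a b p
    induction p with
    | nil => exact id
    | cons h p ih =>
      intro ha
      apply ih
      rename_i u v w
      have hadj : G.Adj (u : V) (v : V) := h.2.2
      have hu : (u : V) ∈ S \ {tail d} := by
        refine ⟨ha, ?_⟩
        have := u.2.2
        simpa using this
      exact hclosed _ hu _ hadj
  -- S = univ
  obtain ⟨x0, hx0S, hx0ne⟩ := hne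
  have hx0ne' : x0 ≠ tail d := hx0ne
  have hSuniv : ∀ w : V, w ∈ S := by
    intro w
    by_cases hw : w = tail d
    · exact hw ▸ hd
    · have hx0v : x0 ∈ ((⊤ : G.Subgraph).deleteVerts {tail d}).verts := by
        simp [hx0ne']
      have hwv : w ∈ ((⊤ : G.Subgraph).deleteVerts {tail d}).verts := by
        simp [hw]
      obtain ⟨p⟩ := (hbic (tail d)).preconnected ⟨x0, hx0v⟩ ⟨w, hwv⟩
      exact walkS _ _ p hx0S
  -- tail is surjective, contradiction with card
  have hsurj : Function.Surjective tail := by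
    intro v
    obtain ⟨a, ha⟩ := hS (hSuniv v)
    exact ⟨a, ha⟩
  have := Fintype.card_le_of_surjective tail hsurj
  omega
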